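/- arXiv:1907.05629 — 3 statements merged into one kernel-verified Lean document; each statement's English description precedes it below -/
import Mathlib

section
/- Let θ be an inner function and define H : H² → H² by Hf = P(z̄·θ·conj(f)) (the Hankel operator with symbol S*θ). Then H is a bounded antilinear operator satisfying S*H = HS, its range equals K_θ, its Schmidt subspace at s = 1 satisfies ker(H∘H − I) = K_θ, and the action of H on K_θ is the antilinear involution Hh = z̄·θ·conj(h) for every h ∈ K_θ. -/
open MeasureTheory Complex Filter

noncomputable section

namespace HankelSchmidt

instance fact_two_pi_pos : Fact (0 < 2 * Real.pi) := ⟨Real.two_pi_pos⟩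

/-- The circle `𝕋`, realized as `ℝ / 2πℤ`. -/
abbrev Tc : Type := AddCircle (2 * Real.pi)

/-- Normalized arc-length (Haar) measure on the circle. -/
abbrev muc : Measure Tc := AddCircle.haarAddCircle

/-- The space `L²(𝕋)`. -/
abbrev Ltwo := Lp ℂ 2 muc

/-- The Hardy space `H²`: the subspace of `L²(𝕋)` of functions whose Fourier coefficients
of negative index vanish. -/
def Hardy : Submodule ℂ Ltwo where
  carrier := {f | ∀ n : ℤ, n < 0 → fourierBasis.repr f n = 0}
  add_mem' := by
    intro a b ha hb n hn
    simp [map_add, lp.coeFn_add, ha n hn, hb n hn]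
  zero_mem' := by
    intro n hn
    simp
  smul_mem' := by
    intro c a ha n hn
    simp [_root_.map_smul, lp.coeFn_smul, ha n hn]

theorem hardy_isClosed : IsClosed (Hardy : Set Ltwo) := by
  have hset : (Hardy : Set Ltwo) =
      ⋂ (n : ℤ) (_ : n < 0), {f : Ltwo | fourierBasis.repr f n = 0} := by
    ext f
    simp only [Set.mem_iInter, Set.mem_setOf_eq]
    rfl
  rw [hset]
  refine isClosed_iInter fun n => isClosed_iInter fun hn => ?_
  have hcont : Continuous fun f : Ltwo => fourierBasis.repr f n := by
    have h1 : Continuous fun g : lp (fun _ : ℤ => ℂ) 2 => g n :=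
      (continuous_apply n).comp lp.uniformContinuous_coe.continuous
    exact h1.comp fourierBasis.repr.continuous
  exact isClosed_eq hcont continuous_const

instance : CompleteSpace (Hardy : Submodule ℂ Ltwo) := hardy_isClosed.completeSpace_coe

/-- The Hardy space as a type. -/
abbrev Hd := (Hardy : Submodule ℂ Ltwo)

/-- The orthogonal projection `P : L²(𝕋) → H²`. -/
def P2 : Ltwo → Hd := fun f => Hardy.orthogonalProjectionOnto f

/-- The orthogonal projection `P`, viewed as a map `L²(𝕋) → L²(𝕋)` with range `H²`. -/
def PL : Ltwo → Ltwo := fun f => ((P2 f : Hd) : Ltwo)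

theorem fourierCoeff_congr_ae {f g : Tc → ℂ} (h : f =ᵐ[muc] g) (n : ℤ) :
    fourierCoeff f n = fourierCoeff g n :=
  integral_congr_ae (h.mono fun x hx => by dsimp only; rw [hx])

theorem mem_Hardy_iff {f : Ltwo} :
    f ∈ Hardy ↔ ∀ n : ℤ, n < 0 → fourierCoeff (f : Tc → ℂ) n = 0 := by
  constructor
  · intro hf n hn; rw [← fourierBasis_repr]; exact hf n hn
  · intro hf n hn; rw [fourierBasis_repr]; exact hf n hn

/-- Pointwise multiplication by a bounded measurable function preserves `L²`. -/
theorem memLp_mul_of_bounded {g : Tc → ℂ} (hg : AEStronglyMeasurable g muc) {C : ℝ}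
    (hb : ∀ᵐ x ∂muc, ‖g x‖ ≤ C) (f : Ltwo) :
    MemLp (fun x => g x * (f : Tc → ℂ) x) 2 muc := by
  refine MemLp.of_le_mul (c := C) (Lp.memLp f) (hg.mul (Lp.aestronglyMeasurable f)) ?_
  filter_upwards [hb] with x hx
  rw [norm_mul]
  exact mul_le_mul_of_nonneg_right hx (norm_nonneg _)

theorem fourier_abs (n : ℤ) (x : Tc) : ‖fourier n x‖ = 1 := by
  rw [fourier_apply]; exact Circle.norm_coe _

theorem fourier_norm_one (n : ℤ) (x : Tc) : ‖fourier n x‖ ≤ 1 :=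
  le_of_eq (fourier_abs n x)

/-- Multiplication of an `L²` function by the monomial `z^n`. -/
def mulF (n : ℤ) (f : Ltwo) : Ltwo :=
  (memLp_mul_of_bounded ((map_continuous (fourier n)).aestronglyMeasurable)
    (Eventually.of_forall (fourier_norm_one n)) f).toLp _

theorem mulF_coe (n : ℤ) (f : Ltwo) :
    (mulF n f : Tc → ℂ) =ᵐ[muc] fun x => fourier n x * (f : Tc → ℂ) x :=
  MemLp.coeFn_toLp _

theorem fourierCoeff_fourier_mul (f : Tc → ℂ) (m n : ℤ) :
    fourierCoeff (fun x => fourier m x * f x) n = fourierCoeff f (n - m) := by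
  unfold fourierCoeff
  refine integral_congr_ae (Eventually.of_forall fun x => ?_)
  have h : @fourier (2 * Real.pi) (-(n - m)) x = fourier (-n) x * fourier m x := by
    rw [show -(n - m) = -n + m by ring, fourier_add]
  simp only [smul_eq_mul, h]
  ring

/-- The shift operator `S : H² → H²`, `(Sf)(z) = z·f(z)`. -/
def Sop (f : Hd) : Hd :=
  ⟨mulF 1 (f : Ltwo), by
    rw [mem_Hardy_iff]
    intro n hn
    rw [fourierCoeff_congr_ae (mulF_coe 1 (f : Ltwo)) n, fourierCoeff_fourier_mul]
    exact (mem_Hardy_iff.mp f.2) (n - 1) (by omega)⟩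

/-- The adjoint shift `S* : H² → H²`, `S*f = P(z̄·f)`. -/
def SstarOp (f : Hd) : Hd := P2 (mulF (-1) (f : Ltwo))

/-- The constant function `𝟙 ∈ H²`. -/
def oneH : Hd :=
  ⟨fourierLp 2 0, by
    rw [mem_Hardy_iff]
    intro n hn
    rw [← fourierBasis_repr]
    have h1 : (fourierLp (T := 2 * Real.pi) 2 0) = fourierBasis 0 := by
      rw [coe_fourierBasis]
    rw [h1, HilbertBasis.repr_self, lp.single_apply]
    rw [Pi.single_apply, if_neg (by omega : n ≠ 0)]⟩

/-- The inner product on `H²`, linear in the FIRST argument (the paper's convention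
`⟨f, g⟩ = ∫ f ḡ`). -/
def ipH (f g : Hd) : ℂ := @inner ℂ Ltwo _ (g : Ltwo) (f : Ltwo)

/-- The inner product on `L²(𝕋)`, linear in the FIRST argument. -/
def ipL (f g : Ltwo) : ℂ := @inner ℂ Ltwo _ g f

/-- `θ ∈ H²` is an inner function if `|θ(z)| = 1` a.e. on `𝕋`. -/
def IsInnerFn (θ : Hd) : Prop := ∀ᵐ x ∂muc, ‖((θ : Ltwo) : Tc → ℂ) x‖ = 1

/-- The set `θ·H² ⊆ L²(𝕋)` of pointwise a.e. products `θ·f`, `f ∈ H²`. -/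
def thetaHardy (θ : Hd) : Set Ltwo :=
  {g : Ltwo | ∃ f : Hd, (g : Tc → ℂ) =ᵐ[muc]
    fun x => ((θ : Ltwo) : Tc → ℂ) x * ((f : Ltwo) : Tc → ℂ) x}

/-- The model space `K_θ = H² ∩ (θH²)^⊥`, as a subset of `L²(𝕋)`. -/
def KspaceL (θ : Hd) : Set Ltwo :=
  {h : Ltwo | h ∈ Hardy ∧ ∀ g ∈ thetaHardy θ, ipL h g = 0}

/-- The model space `K_θ`, as a subset of `H²`. -/
def Kspace (θ : Hd) : Set Hd := {h : Hd | (h : Ltwo) ∈ KspaceL θ}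

/-- `p` is an isometric multiplier on `K_θ`: `p` is measurable and, for every `h ∈ K_θ`,
the pointwise product `p·h` lies in `H²` and has the same norm as `h`. -/
def IsIsomMult (p : Tc → ℂ) (θ : Hd) : Prop :=
  Measurable p ∧ ∀ h ∈ Kspace θ, ∃ g : Hd,
    ((g : Ltwo) : Tc → ℂ) =ᵐ[muc] (fun x => p x * ((h : Ltwo) : Tc → ℂ) x) ∧
    ‖(g : Ltwo)‖ = ‖(h : Ltwo)‖

/-- The subspace `p·K_θ = {p·h : h ∈ K_θ}` of `H²`. -/
def wModel (p : Tc → ℂ) (θ : Hd) : Set Hd :=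
  {g : Hd | ∃ h ∈ Kspace θ, ((g : Ltwo) : Tc → ℂ) =ᵐ[muc]
    fun x => p x * ((h : Ltwo) : Tc → ℂ) x}

/-- A bounded Hankel operator on `H²`: a continuous antilinear map `H : H² → H²`
satisfying `S*H = HS`. -/
def IsHankelOp (H : Hd →L⋆[ℂ] Hd) : Prop := ∀ f : Hd, SstarOp (H f) = H (Sop f)

/-- A bounded measurable symbol on the circle (an `L^∞` function). -/
def IsBddFn (u : Tc → ℂ) : Prop := Measurable u ∧ ∃ C : ℝ, ∀ᵐ x ∂muc, ‖u x‖ ≤ C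

theorem memLp_mul_conj {u : Tc → ℂ} (hu : IsBddFn u) (f : Ltwo) :
    MemLp (fun x => u x * (starRingEnd ℂ) ((f : Tc → ℂ) x)) 2 muc := by
  obtain ⟨hmeas, C, hC⟩ := hu
  refine MemLp.of_le_mul (c := C) (Lp.memLp f)
    (hmeas.aestronglyMeasurable.mul
      (continuous_star.comp_aestronglyMeasurable (Lp.aestronglyMeasurable f))) ?_
  filter_upwards [hC] with x hx
  rw [norm_mul, RCLike.norm_conj]
  exact mul_le_mul_of_nonneg_right hx (norm_nonneg _)

/-- The Hankel operator with symbol `u`: `H_u f = P(u·f̄)`, defined on all of `L²(𝕋)`. -/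
def hankelL (u : Tc → ℂ) (hu : IsBddFn u) : Ltwo → Ltwo :=
  fun f => PL ((memLp_mul_conj hu f).toLp _)

/-- The Möbius transformation `μ(z) = (α − z)/(1 − ᾱz)` of the unit disk. -/
def mobius (α z : ℂ) : ℂ := (α - z) / (1 - (starRingEnd ℂ) α * z)

/-- The point `e^{ix} ∈ ℂ` corresponding to `x ∈ 𝕋`. -/
def circlePt (x : Tc) : ℂ := fourier 1 x

/-- The Möbius transformation `μ` viewed as a self-map of `𝕋`. -/
def mobiusT (α : ℂ) (x : Tc) : Tc := ((Complex.arg (mobius α (circlePt x)) : ℝ) : Tc)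

/-- The weight `√(1 − |α|²)/(1 − ᾱz)` in the definition of `U_μ`. -/
def umuWeight (α : ℂ) (x : Tc) : ℂ :=
  (Real.sqrt (1 - ‖α‖ ^ 2) : ℂ) / (1 - (starRingEnd ℂ) α * circlePt x)

/-- `U` is the operator `U_μ`: `(U_μ f)(z) = (√(1 − |α|²)/(1 − ᾱz))·f(μ(z))` a.e. -/
def IsUmu (α : ℂ) (U : Ltwo → Ltwo) : Prop :=
  ∀ f : Ltwo, ((U f : Ltwo) : Tc → ℂ) =ᵐ[muc]
    fun x => umuWeight α x * (f : Tc → ℂ) (mobiusT α x)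


theorem memLp_sstarTheta {θ : Hd} (hθ : IsInnerFn θ) (f : Ltwo) :
    MemLp (fun x => (starRingEnd ℂ) (fourier 1 x) * ((θ : Ltwo) : Tc → ℂ) x *
      (starRingEnd ℂ) ((f : Tc → ℂ) x)) 2 muc := by
  refine MemLp.of_le_mul (c := 1) (Lp.memLp f) ?_ ?_
  · exact ((continuous_star.comp (map_continuous (fourier 1))).aestronglyMeasurable.mul
      (Lp.aestronglyMeasurable (θ : Ltwo))).mul
      (continuous_star.comp_aestronglyMeasurable (Lp.aestronglyMeasurable f))
  · filter_upwards [hθ] with x hx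
    have h1 : ‖(starRingEnd ℂ) (fourier 1 x)‖ = 1 := by
      rw [RCLike.norm_conj, fourier_abs]
    have h2 : ‖((θ : Ltwo) : Tc → ℂ) x‖ = 1 := by
      exact hx
    rw [norm_mul, norm_mul, h1, h2, RCLike.norm_conj, one_mul, one_mul]

/-- The Hankel operator with symbol `S*θ`: `H f = P(z̄·θ·f̄)`. -/
def hankelTheta (θ : Hd) (hθ : IsInnerFn θ) : Hd → Hd :=
  fun f => P2 ((memLp_sstarTheta hθ (f : Ltwo)).toLp _)

/-! ### Auxiliary lemmas -/

theorem inner_eq_zero_of_coeff {f g : Ltwo}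
    (h : ∀ n : ℤ, fourierCoeff (f : Tc → ℂ) n = 0 ∨ fourierCoeff (g : Tc → ℂ) n = 0) :
    (inner ℂ f g : ℂ) = 0 := by
  rw [← fourierBasis.tsum_inner_mul_inner f g]
  have hz : ∀ n : ℤ, (inner ℂ f (fourierBasis n) : ℂ) * (inner ℂ (fourierBasis n) g : ℂ) = 0 := by
    intro n
    have h1 : (inner ℂ (fourierBasis n) f : ℂ) = fourierCoeff (f : Tc → ℂ) n := by
      rw [← fourierBasis.repr_apply_apply, fourierBasis_repr]
    have h2 : (inner ℂ (fourierBasis n) g : ℂ) = fourierCoeff (g : Tc → ℂ) n := by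
      rw [← fourierBasis.repr_apply_apply, fourierBasis_repr]
    rcases h n with h0 | h0
    · rw [← inner_conj_symm, h1, h0, map_zero, zero_mul]
    · rw [h2, h0, mul_zero]
  rw [tsum_congr hz, tsum_zero]

theorem mem_orth_of_coeff {f : Ltwo} (h : ∀ n : ℤ, 0 ≤ n → fourierCoeff (f : Tc → ℂ) n = 0) :
    f ∈ Hardyᗮ := by
  rw [Submodule.mem_orthogonal]
  intro u hu
  refine inner_eq_zero_of_coeff fun n => ?_
  rcases lt_or_ge n 0 with h' | h'
  · exact Or.inl (mem_Hardy_iff.mp hu n h')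
  · exact Or.inr (h n h')

theorem monomial_mem_Hardy {m : ℤ} (hm : 0 ≤ m) : (fourierLp 2 m : Ltwo) ∈ Hardy := by
  rw [mem_Hardy_iff]
  intro n hn
  rw [← fourierBasis_repr]
  have h1 : (fourierLp (T := 2 * Real.pi) 2 m) = fourierBasis m := by rw [coe_fourierBasis]
  rw [h1, HilbertBasis.repr_self, lp.single_apply, Pi.single_apply, if_neg (by omega : n ≠ m)]

theorem coeff_of_mem_orth {f : Ltwo} (hf : f ∈ Hardyᗮ) {n : ℤ} (hn : 0 ≤ n) :
    fourierCoeff (f : Tc → ℂ) n = 0 := by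
  have hb : (fourierBasis n : Ltwo) ∈ Hardy := by
    have h1 : (fourierBasis (T := 2 * Real.pi) n : Ltwo) = fourierLp 2 n :=
      congrFun coe_fourierBasis n
    rw [h1]; exact monomial_mem_Hardy hn
  rw [← fourierBasis_repr, fourierBasis.repr_apply_apply]
  exact (Submodule.mem_orthogonal Hardy f).mp hf _ hb

theorem memLp_conj (f : Ltwo) :
    MemLp (fun x => (starRingEnd ℂ) ((f : Tc → ℂ) x)) 2 muc := by
  refine MemLp.of_le (Lp.memLp f)
    (continuous_star.comp_aestronglyMeasurable (Lp.aestronglyMeasurable f)) ?_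
  exact Eventually.of_forall fun x => le_of_eq (RCLike.norm_conj _)

/-- Pointwise complex conjugation of an `L²` function. -/
def conjL (f : Ltwo) : Ltwo := (memLp_conj f).toLp _

theorem conjL_coe (f : Ltwo) :
    (conjL f : Tc → ℂ) =ᵐ[muc] fun x => (starRingEnd ℂ) ((f : Tc → ℂ) x) :=
  MemLp.coeFn_toLp _

theorem fourierCoeff_conj (f : Tc → ℂ) (n : ℤ) :
    fourierCoeff (fun x => (starRingEnd ℂ) (f x)) n
      = (starRingEnd ℂ) (fourierCoeff f (-n)) := by
  unfold fourierCoeff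
  rw [← integral_conj]
  refine integral_congr_ae (Eventually.of_forall fun x => ?_)
  simp only [smul_eq_mul, map_mul, neg_neg, ← fourier_neg]

theorem fourierCoeff_mulF (m : ℤ) (f : Ltwo) (n : ℤ) :
    fourierCoeff ((mulF m f : Ltwo) : Tc → ℂ) n = fourierCoeff (f : Tc → ℂ) (n - m) := by
  rw [fourierCoeff_congr_ae (mulF_coe m f), fourierCoeff_fourier_mul]

theorem inner_eq_integral (f g : Ltwo) :
    (inner ℂ f g : ℂ) = ∫ x, (starRingEnd ℂ) ((f : Tc → ℂ) x) * (g : Tc → ℂ) x ∂muc := by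
  rw [MeasureTheory.L2.inner_def]
  refine integral_congr_ae (Eventually.of_forall fun x => ?_)
  simp [RCLike.inner_apply]
  ring

theorem mulF_sub (m : ℤ) (a b : Ltwo) : mulF m (a - b) = mulF m a - mulF m b := by
  refine Lp.ext ?_
  filter_upwards [mulF_coe m (a - b), mulF_coe m a, mulF_coe m b,
    Lp.coeFn_sub (mulF m a) (mulF m b), Lp.coeFn_sub a b] with x h1 h2 h3 h4 h5
  rw [h1, h4]
  simp only [Pi.sub_apply, h2, h3, h5, mul_sub]
theorem conj_theta_mul {θ : Hd} (hθ : IsInnerFn θ) :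
    ∀ᵐ x ∂muc, (starRingEnd ℂ) (((θ : Ltwo) : Tc → ℂ) x) * ((θ : Ltwo) : Tc → ℂ) x = 1 := by
  filter_upwards [hθ] with x hx
  rw [mul_comm, Complex.mul_conj, Complex.normSq_eq_norm_sq, hx]
  norm_num

/-- The function `z̄·θ·f̄` as an element of `L²`. -/
def wLp (θ : Hd) (hθ : IsInnerFn θ) (f : Ltwo) : Ltwo := (memLp_sstarTheta hθ f).toLp _

theorem wLp_coe (θ : Hd) (hθ : IsInnerFn θ) (f : Ltwo) :
    (wLp θ hθ f : Tc → ℂ) =ᵐ[muc]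
      fun x => (starRingEnd ℂ) (fourier 1 x) * ((θ : Ltwo) : Tc → ℂ) x *
        (starRingEnd ℂ) ((f : Tc → ℂ) x) := MemLp.coeFn_toLp _

theorem hankelTheta_eq (θ : Hd) (hθ : IsInnerFn θ) (f : Hd) :
    hankelTheta θ hθ f = P2 (wLp θ hθ (f : Ltwo)) := rfl

theorem wLp_coeff (θ : Hd) (hθ : IsInnerFn θ) (f : Ltwo) (n : ℤ) :
    fourierCoeff ((wLp θ hθ f : Ltwo) : Tc → ℂ) n
      = (starRingEnd ℂ) (inner ℂ (mulF (-(n + 1)) (θ : Ltwo)) f : ℂ) := by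
  rw [fourierCoeff_congr_ae (wLp_coe θ hθ f), inner_eq_integral, ← integral_conj]
  unfold fourierCoeff
  refine integral_congr_ae ?_
  filter_upwards [mulF_coe (-(n + 1)) (θ : Ltwo)] with x hx
  rw [hx]
  have hadd : (-(n + 1) : ℤ) = -n + -1 := by ring
  rw [hadd, fourier_add]
  simp only [smul_eq_mul, map_mul, Complex.conj_conj, ← fourier_neg]
  ring

theorem coeff_theta_mul (θ : Hd) (g' : Hd) {g : Ltwo}
    (hg : (g : Tc → ℂ) =ᵐ[muc]
      fun x => ((θ : Ltwo) : Tc → ℂ) x * ((g' : Ltwo) : Tc → ℂ) x) (n : ℤ) :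
    fourierCoeff (g : Tc → ℂ) n = (inner ℂ (mulF n (conjL (θ : Ltwo))) (g' : Ltwo) : ℂ) := by
  rw [fourierCoeff_congr_ae hg, inner_eq_integral]
  unfold fourierCoeff
  refine integral_congr_ae ?_
  filter_upwards [mulF_coe n (conjL (θ : Ltwo)), conjL_coe (θ : Ltwo)] with x hx hcx
  rw [hx, hcx]
  simp only [smul_eq_mul, map_mul, Complex.conj_conj, ← fourier_neg]
  ring

theorem thetaHardy_subset_Hardy (θ : Hd) {g : Ltwo} (hg : g ∈ thetaHardy θ) : g ∈ Hardy := by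
  obtain ⟨g', hg'⟩ := hg
  rw [mem_Hardy_iff]
  intro n hn
  rw [coeff_theta_mul θ g' hg']
  refine inner_eq_zero_of_coeff fun k => ?_
  rcases lt_or_ge k 0 with hk | hk
  · exact Or.inr (mem_Hardy_iff.mp g'.2 k hk)
  · refine Or.inl ?_
    rw [fourierCoeff_mulF, fourierCoeff_congr_ae (conjL_coe _), fourierCoeff_conj,
      mem_Hardy_iff.mp θ.2 (-(k - n)) (by omega), map_zero]

theorem inner_thetaMul_wLp (θ : Hd) (hθ : IsInnerFn θ) {g : Ltwo}
    (hg : g ∈ thetaHardy θ) (f : Hd) :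
    (inner ℂ g (wLp θ hθ (f : Ltwo)) : ℂ) = 0 := by
  obtain ⟨g', hg'⟩ := hg
  have key : (inner ℂ g (wLp θ hθ (f : Ltwo)) : ℂ)
      = (starRingEnd ℂ) (inner ℂ (mulF (-1) (conjL (g' : Ltwo))) (f : Ltwo) : ℂ) := by
    rw [inner_eq_integral, inner_eq_integral, ← integral_conj]
    refine integral_congr_ae ?_
    filter_upwards [hg', wLp_coe θ hθ (f : Ltwo), mulF_coe (-1) (conjL (g' : Ltwo)),
      conjL_coe (g' : Ltwo), conj_theta_mul hθ] with x h1 h2 h3 h4 h5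
    rw [h1, h2, h3, h4]
    simp only [map_mul, Complex.conj_conj, ← fourier_neg, neg_neg]
    linear_combination (fourier (-1) x * (starRingEnd ℂ) (((g' : Ltwo) : Tc → ℂ) x) *
      (starRingEnd ℂ) (((f : Ltwo) : Tc → ℂ) x)) * h5
  rw [key]
  have hz : (inner ℂ (mulF (-1) (conjL (g' : Ltwo))) (f : Ltwo) : ℂ) = 0 := by
    refine inner_eq_zero_of_coeff fun n => ?_
    rcases lt_or_ge n 0 with hn | hn
    · exact Or.inr (mem_Hardy_iff.mp f.2 n hn)
    · refine Or.inl ?_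
      rw [fourierCoeff_mulF, fourierCoeff_congr_ae (conjL_coe _), fourierCoeff_conj,
        mem_Hardy_iff.mp g'.2 (-(n - -1)) (by omega), map_zero]
  rw [hz, map_zero]
theorem wLp_mem_Hardy_of_Kspace (θ : Hd) (hθ : IsInnerFn θ) {h : Hd} (hh : h ∈ Kspace θ) :
    wLp θ hθ (h : Ltwo) ∈ Hardy := by
  rw [mem_Hardy_iff]
  intro n hn
  rw [wLp_coeff]
  have hm : (0 : ℤ) ≤ -(n + 1) := by omega
  have hmem : mulF (-(n + 1)) (θ : Ltwo) ∈ thetaHardy θ := by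
    refine ⟨⟨fourierLp 2 (-(n + 1)), monomial_mem_Hardy hm⟩, ?_⟩
    filter_upwards [mulF_coe (-(n + 1)) (θ : Ltwo),
      coeFn_fourierLp (T := 2 * Real.pi) 2 (-(n + 1))] with x h1 h2
    rw [h1]
    show fourier (-(n + 1)) x * ((θ : Ltwo) : Tc → ℂ) x
      = ((θ : Ltwo) : Tc → ℂ) x * (fourierLp 2 (-(n + 1)) : Tc → ℂ) x
    rw [h2]
    ring
  have h0 : (inner ℂ (mulF (-(n + 1)) (θ : Ltwo)) (h : Ltwo) : ℂ) = 0 := hh.2 _ hmem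
  rw [h0, map_zero]

theorem hankelTheta_coe_of_mem (θ : Hd) (hθ : IsInnerFn θ) {h : Hd} (hh : h ∈ Kspace θ) :
    ((hankelTheta θ hθ h : Hd) : Ltwo) = wLp θ hθ (h : Ltwo) := by
  rw [hankelTheta_eq]
  unfold P2
  exact Submodule.starProjection_eq_self_iff.mpr (wLp_mem_Hardy_of_Kspace θ hθ hh)

theorem hankelTheta_mem_Kspace (θ : Hd) (hθ : IsInnerFn θ) (f : Hd) :
    hankelTheta θ hθ f ∈ Kspace θ := by
  refine ⟨(hankelTheta θ hθ f).2, ?_⟩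
  intro g hg
  show (inner ℂ g ((hankelTheta θ hθ f : Hd) : Ltwo) : ℂ) = 0
  rw [hankelTheta_eq]
  unfold P2
  have hgH : g ∈ Hardy := thetaHardy_subset_Hardy θ hg
  have e1 : (inner ℂ g ((Hardy.orthogonalProjectionOnto (wLp θ hθ (f : Ltwo)) : Hd) : Ltwo) : ℂ)
      = inner ℂ ((Hardy.orthogonalProjectionOnto g : Hd) : Ltwo) (wLp θ hθ (f : Ltwo)) :=
    (Submodule.inner_starProjection_left_eq_right Hardy g (wLp θ hθ (f : Ltwo))).symm
  rw [e1, show ((Hardy.orthogonalProjectionOnto g : Hd) : Ltwo) = g from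
      Submodule.starProjection_eq_self_iff.mpr hgH]
  exact inner_thetaMul_wLp θ hθ hg f

theorem hankelTheta_involution (θ : Hd) (hθ : IsInnerFn θ) {h : Hd} (hh : h ∈ Kspace θ) :
    hankelTheta θ hθ (hankelTheta θ hθ h) = h := by
  have hcoe := hankelTheta_coe_of_mem θ hθ hh
  have hae : (((hankelTheta θ hθ h : Hd) : Ltwo) : Tc → ℂ) =ᵐ[muc]
      fun x => (starRingEnd ℂ) (fourier 1 x) * ((θ : Ltwo) : Tc → ℂ) x *
        (starRingEnd ℂ) (((h : Ltwo) : Tc → ℂ) x) := by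
    rw [hcoe]; exact wLp_coe θ hθ (h : Ltwo)
  have hw : wLp θ hθ ((hankelTheta θ hθ h : Hd) : Ltwo) = (h : Ltwo) := by
    refine Lp.ext ?_
    filter_upwards [wLp_coe θ hθ ((hankelTheta θ hθ h : Hd) : Ltwo), hae,
      conj_theta_mul hθ] with x h1 h2 h3
    rw [h1, h2]
    have hz : (starRingEnd ℂ) (fourier 1 x) * fourier 1 x = 1 := by
      rw [mul_comm, Complex.mul_conj, Complex.normSq_eq_norm_sq, fourier_abs]
      norm_num
    simp only [map_mul, Complex.conj_conj]
    linear_combination ((starRingEnd ℂ) (((θ : Ltwo) : Tc → ℂ) x) * ((θ : Ltwo) : Tc → ℂ) x *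
        (((h : Ltwo) : Tc → ℂ) x)) * hz + (((h : Ltwo) : Tc → ℂ) x) * h3
  rw [hankelTheta_eq]
  unfold P2
  rw [hw]
  exact Submodule.orthogonalProjectionOnto_mem_subspace_eq_self h

theorem hankel_commute (θ : Hd) (hθ : IsInnerFn θ) (f : Hd) :
    SstarOp (hankelTheta θ hθ f) = hankelTheta θ hθ (Sop f) := by
  have hw : wLp θ hθ ((Sop f : Hd) : Ltwo) = mulF (-1) (wLp θ hθ (f : Ltwo)) := by
    refine Lp.ext ?_
    filter_upwards [wLp_coe θ hθ ((Sop f : Hd) : Ltwo), mulF_coe (-1) (wLp θ hθ (f : Ltwo)),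
      wLp_coe θ hθ (f : Ltwo), mulF_coe 1 (f : Ltwo)] with x h1 h2 h3 h4
    have h5 : (((Sop f : Hd) : Ltwo) : Tc → ℂ) x
        = fourier 1 x * ((f : Ltwo) : Tc → ℂ) x := h4
    rw [h1, h2, h3, h5]
    simp only [map_mul, Complex.conj_conj, ← fourier_neg, neg_neg]
    ring
  rw [hankelTheta_eq θ hθ (Sop f), hw, hankelTheta_eq θ hθ f]
  unfold SstarOp P2
  set u := wLp θ hθ (f : Ltwo) with hu
  have hd : u - ((Hardy.orthogonalProjectionOnto u : Hd) : Ltwo) ∈ Hardyᗮ :=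
    Submodule.sub_starProjection_mem_orthogonal (K := Hardy) u
  have hdm : mulF (-1) (u - ((Hardy.orthogonalProjectionOnto u : Hd) : Ltwo)) ∈ Hardyᗮ := by
    refine mem_orth_of_coeff fun n hn => ?_
    rw [fourierCoeff_mulF]
    exact coeff_of_mem_orth hd (by omega)
  have hsplit : mulF (-1) ((Hardy.orthogonalProjectionOnto u : Hd) : Ltwo)
      = mulF (-1) u - mulF (-1) (u - ((Hardy.orthogonalProjectionOnto u : Hd) : Ltwo)) := by
    rw [← mulF_sub, sub_sub_cancel]
  rw [hsplit, map_sub, Submodule.orthogonalProjectionOnto_apply_of_mem_orthogonal hdm,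
    sub_zero]

theorem wLp_add (θ : Hd) (hθ : IsInnerFn θ) (f g : Hd) :
    wLp θ hθ ((f + g : Hd) : Ltwo) = wLp θ hθ (f : Ltwo) + wLp θ hθ (g : Ltwo) := by
  refine Lp.ext ?_
  filter_upwards [wLp_coe θ hθ ((f + g : Hd) : Ltwo),
    Lp.coeFn_add (wLp θ hθ (f : Ltwo)) (wLp θ hθ (g : Ltwo)),
    wLp_coe θ hθ (f : Ltwo), wLp_coe θ hθ (g : Ltwo),
    Lp.coeFn_add (f : Ltwo) (g : Ltwo)] with x h1 h2 h3 h4 h5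
  have hc : (((f + g : Hd) : Ltwo) : Tc → ℂ) x
      = ((f : Ltwo) : Tc → ℂ) x + ((g : Ltwo) : Tc → ℂ) x := h5
  rw [h1, h2, Pi.add_apply, h3, h4, hc, map_add]
  ring

theorem wLp_smul (θ : Hd) (hθ : IsInnerFn θ) (c : ℂ) (f : Hd) :
    wLp θ hθ ((c • f : Hd) : Ltwo) = (starRingEnd ℂ) c • wLp θ hθ (f : Ltwo) := by
  refine Lp.ext ?_
  filter_upwards [wLp_coe θ hθ ((c • f : Hd) : Ltwo),
    Lp.coeFn_smul ((starRingEnd ℂ) c) (wLp θ hθ (f : Ltwo)),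
    wLp_coe θ hθ (f : Ltwo), Lp.coeFn_smul c (f : Ltwo)] with x h1 h2 h3 h4
  have hc : (((c • f : Hd) : Ltwo) : Tc → ℂ) x = c • ((f : Ltwo) : Tc → ℂ) x := h4
  rw [h1, h2, Pi.smul_apply, h3, hc]
  simp only [smul_eq_mul, map_mul]
  ring

theorem wLp_norm (θ : Hd) (hθ : IsInnerFn θ) (f : Ltwo) : ‖wLp θ hθ f‖ = ‖f‖ := by
  rw [wLp, Lp.norm_toLp, Lp.norm_def]
  congr 1
  refine eLpNorm_congr_norm_ae ?_
  filter_upwards [hθ] with x hx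
  rw [norm_mul, norm_mul, RCLike.norm_conj, RCLike.norm_conj]
  rw [fourier_abs, hx]
  ring

/-- For an inner function `θ`, the Hankel operator `H_{S*θ}` is a bounded antilinear
Hankel operator, its range is `K_θ`, its Schmidt subspace at `s = 1` is `K_θ`, and it acts
on `K_θ` as the antilinear involution `h ↦ z̄·θ·h̄`. -/
theorem hankel_of_inner_function (θ : Hd) (hθ : IsInnerFn θ) :
    (∀ f g : Hd, hankelTheta θ hθ (f + g) = hankelTheta θ hθ f + hankelTheta θ hθ g) ∧
    (∀ (c : ℂ) (f : Hd), hankelTheta θ hθ (c • f) = (starRingEnd ℂ) c • hankelTheta θ hθ f) ∧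
    (∃ Cb : ℝ, ∀ f : Hd, ‖((hankelTheta θ hθ f : Hd) : Ltwo)‖ ≤ Cb * ‖(f : Ltwo)‖) ∧
    (∀ f : Hd, SstarOp (hankelTheta θ hθ f) = hankelTheta θ hθ (Sop f)) ∧
    Set.range (hankelTheta θ hθ) = Kspace θ ∧
    {f : Hd | hankelTheta θ hθ (hankelTheta θ hθ f) = f} = Kspace θ ∧
    ∀ h ∈ Kspace θ, (((hankelTheta θ hθ h : Hd) : Ltwo) : Tc → ℂ) =ᵐ[muc]
      fun x => (starRingEnd ℂ) (fourier 1 x) * ((θ : Ltwo) : Tc → ℂ) x *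
        (starRingEnd ℂ) (((h : Ltwo) : Tc → ℂ) x) := by
  have hinv : ∀ h ∈ Kspace θ, hankelTheta θ hθ (hankelTheta θ hθ h) = h :=
    fun h hh => hankelTheta_involution θ hθ hh
  refine ⟨?_, ?_, ?_, ?_, ?_, ?_, ?_⟩
  · intro f g
    rw [hankelTheta_eq θ hθ (f + g), hankelTheta_eq θ hθ f, hankelTheta_eq θ hθ g, wLp_add]
    unfold P2
    exact map_add _ _ _
  · intro c f
    rw [hankelTheta_eq θ hθ (c • f), hankelTheta_eq θ hθ f, wLp_smul]
    unfold P2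
    exact map_smul _ _ _
  · refine ⟨1, fun f => ?_⟩
    rw [one_mul, hankelTheta_eq θ hθ f]
    unfold P2
    calc ‖((Hardy.orthogonalProjectionOnto (wLp θ hθ (f : Ltwo)) : Hd) : Ltwo)‖
        = ‖Hardy.orthogonalProjectionOnto (wLp θ hθ (f : Ltwo))‖ := rfl
      _ ≤ ‖Hardy.orthogonalProjectionOnto‖ * ‖wLp θ hθ (f : Ltwo)‖ :=
          (Hardy.orthogonalProjectionOnto).le_opNorm _
      _ ≤ 1 * ‖wLp θ hθ (f : Ltwo)‖ := by
          gcongr; exact Hardy.orthogonalProjectionOnto_norm_le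
      _ = ‖(f : Ltwo)‖ := by rw [one_mul, wLp_norm]
  · exact hankel_commute θ hθ
  · ext h
    constructor
    · rintro ⟨f, rfl⟩
      exact hankelTheta_mem_Kspace θ hθ f
    · intro hh
      exact ⟨hankelTheta θ hθ h, hinv h hh⟩
  · ext f
    constructor
    · intro hf
      have hf' : hankelTheta θ hθ (hankelTheta θ hθ f) = f := hf
      exact hf' ▸ hankelTheta_mem_Kspace θ hθ (hankelTheta θ hθ f)
    · intro hf
      exact hinv f hf
  · intro h hh
    have hcoe := hankelTheta_coe_of_mem θ hθ hh
    rw [hcoe]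
    exact wLp_coe θ hθ (h : Ltwo)


end HankelSchmidt
end
end

section
/- Let θ be an inner function. Then S*(K_θ ∩ 𝟙^⊥) = K_θ ∩ (S*θ)^⊥; that is, the set {S*h : h ∈ K_θ, ⟨h, 𝟙⟩ = 0} equals the set {g ∈ K_θ : ⟨g, S*θ⟩ = 0}. -/
open MeasureTheory Complex Filter

noncomputable section

namespace HankelSchmidt

open scoped InnerProductSpace in
theorem Ltwo_ext {f g : Ltwo} (h : ∀ n : ℤ, fourierBasis.repr f n = fourierBasis.repr g n) :
    f = g :=
  fourierBasis.repr.injective (lp.ext (funext h))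

theorem Ltwo_ext_ae {f g : Ltwo} (h : (f : Tc → ℂ) =ᵐ[muc] (g : Tc → ℂ)) : f = g :=
  Ltwo_ext fun n => by
    rw [fourierBasis_repr, fourierBasis_repr]
    exact fourierCoeff_congr_ae h n

theorem repr_mulF (m : ℤ) (f : Ltwo) (n : ℤ) :
    fourierBasis.repr (mulF m f) n = fourierBasis.repr f (n - m) := by
  rw [fourierBasis_repr, fourierBasis_repr,
    fourierCoeff_congr_ae (mulF_coe m f) n, fourierCoeff_fourier_mul]

theorem oneH_coe : ((oneH : Hd) : Ltwo) = fourierLp 2 0 := rfl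

theorem repr_oneH (n : ℤ) :
    fourierBasis.repr ((oneH : Hd) : Ltwo) n = if n = 0 then 1 else 0 := by
  classical
  rw [oneH_coe, show (fourierLp (T := 2 * Real.pi) 2 0) = fourierBasis 0 from
    (congrFun coe_fourierBasis 0).symm, fourierBasis.repr_self, lp.single_apply]
  by_cases h : n = 0
  · subst h
    simp
  · rw [Pi.single_apply, if_neg h]

theorem oneH_ae : (((oneH : Hd) : Ltwo) : Tc → ℂ) =ᵐ[muc] fun _ => 1 := by
  rw [oneH_coe]
  exact (coeFn_fourierLp 2 0).trans (Eventually.of_forall fun x => fourier_zero)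

theorem mem_Hardy_repr {f : Ltwo} (hf : f ∈ Hardy) {n : ℤ} (hn : n < 0) :
    fourierBasis.repr f n = 0 := hf n hn

theorem ipL_tsum (f g : Ltwo) :
    ipL f g = ∑' n : ℤ,
      (starRingEnd ℂ) (fourierBasis.repr g n) * fourierBasis.repr f n := by
  rw [ipL, ← fourierBasis.repr.inner_map_map g f, lp.inner_eq_tsum]
  refine tsum_congr fun n => ?_
  rw [RCLike.inner_apply]
  ring

theorem ipH_eq (f g : Hd) : ipH f g = ipL (f : Ltwo) (g : Ltwo) := rfl

theorem ipL_add_right (x a b : Ltwo) : ipL x (a + b) = ipL x a + ipL x b :=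
  inner_add_left a b x

theorem ipL_smul_right (x : Ltwo) (c : ℂ) (a : Ltwo) :
    ipL x (c • a) = (starRingEnd ℂ) c * ipL x a :=
  inner_smul_left a x c

theorem ipL_mulF (m : ℤ) (x y : Ltwo) : ipL (mulF m x) y = ipL x (mulF (-m) y) := by
  rw [ipL_tsum, ipL_tsum]
  calc ∑' n : ℤ, (starRingEnd ℂ) (fourierBasis.repr y n) * fourierBasis.repr (mulF m x) n
      = ∑' n : ℤ, (starRingEnd ℂ) (fourierBasis.repr y n) * fourierBasis.repr x (n - m) :=
        tsum_congr fun n => by rw [repr_mulF]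
    _ = ∑' n : ℤ, (starRingEnd ℂ) (fourierBasis.repr y ((Equiv.addRight m) n)) *
          fourierBasis.repr x ((Equiv.addRight m) n - m) :=
        (Equiv.tsum_eq (Equiv.addRight m)
          (fun k => (starRingEnd ℂ) (fourierBasis.repr y k) * fourierBasis.repr x (k - m))).symm
    _ = ∑' n : ℤ, (starRingEnd ℂ) (fourierBasis.repr (mulF (-m) y) n) *
          fourierBasis.repr x n :=
        tsum_congr fun n => by
          simp [repr_mulF, sub_neg_eq_add, Equiv.coe_addRight, add_sub_cancel_right]

theorem ipH_oneH (h : Hd) : ipH h oneH = fourierBasis.repr ((h : Hd) : Ltwo) 0 := by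
  rw [ipH_eq, ipL_tsum, tsum_eq_single 0 (fun n hn => by
    rw [repr_oneH, if_neg hn, map_zero, zero_mul])]
  rw [repr_oneH, if_pos rfl, map_one, one_mul]

open scoped InnerProductSpace in
theorem Sstar_repr (h : Hd) (n : ℤ) :
    fourierBasis.repr ((SstarOp h : Hd) : Ltwo) n =
      if n < 0 then 0 else fourierBasis.repr ((h : Hd) : Ltwo) (n + 1) := by
  classical
  set c0 := fourierBasis.repr ((h : Hd) : Ltwo) 0 with hc0
  set y : Ltwo := mulF (-1) (((h : Hd) : Ltwo) - c0 • ((oneH : Hd) : Ltwo)) with hy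
  have hrepr : ∀ m : ℤ, fourierBasis.repr y m =
      fourierBasis.repr ((h : Hd) : Ltwo) (m + 1) - (if m + 1 = 0 then c0 else 0) := by
    intro m
    rw [hy, repr_mulF, sub_neg_eq_add, map_sub, _root_.map_smul, lp.coeFn_sub, Pi.sub_apply,
      lp.coeFn_smul, Pi.smul_apply, repr_oneH, smul_eq_mul, mul_ite, mul_one, mul_zero]
  have hyH : y ∈ Hardy := by
    intro m hm
    rw [hrepr]
    by_cases hm1 : m + 1 = 0
    · rw [if_pos hm1, hm1, hc0, sub_self]
    · rw [if_neg hm1, mem_Hardy_repr h.2 (by omega), sub_zero]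
  have hortho : ∀ w ∈ Hardy, ⟪mulF (-1) ((h : Hd) : Ltwo) - y, w⟫_ℂ = 0 := by
    intro w hw
    have hxy : mulF (-1) ((h : Hd) : Ltwo) - y = c0 • (fourierBasis (-1) : Ltwo) := by
      apply Ltwo_ext; intro m
      rw [map_sub, lp.coeFn_sub, Pi.sub_apply, repr_mulF, sub_neg_eq_add, hrepr,
        _root_.map_smul, lp.coeFn_smul, Pi.smul_apply, fourierBasis.repr_self, smul_eq_mul]
      by_cases hm : m = -1
      · rw [hm, lp.single_apply_self]
        norm_num
      · rw [lp.single_apply_ne 2 (-1) _ hm, mul_zero, if_neg (by omega)]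
        ring
    rw [hxy, inner_smul_left, ← fourierBasis.repr_apply_apply,
      mem_Hardy_repr hw (by norm_num), mul_zero]
  have hproj : ((SstarOp h : Hd) : Ltwo) = y :=
    by
      have := Submodule.eq_starProjection_of_mem_of_inner_eq_zero hyH hortho
      rw [Submodule.starProjection_apply] at this
      exact this
  rw [hproj, hrepr]
  by_cases hn : n < 0
  · rw [if_pos hn]
    by_cases hm1 : n + 1 = 0
    · rw [if_pos hm1, hm1, hc0, sub_self]
    · rw [if_neg hm1, mem_Hardy_repr h.2 (by omega), sub_zero]
  · rw [if_neg hn, if_neg (by omega), sub_zero]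

theorem theta_bound (θ : Hd) (hθ : IsInnerFn θ) :
    ∀ᵐ x ∂muc, ‖(((θ : Hd) : Ltwo) : Tc → ℂ) x‖ ≤ 1 := by
  filter_upwards [hθ] with x hx
  rw [hx]

/-- Multiplication by `θ` as a map into `L²`. -/
def thetaMul (θ : Hd) (hθ : IsInnerFn θ) (f : Ltwo) : Ltwo :=
  (memLp_mul_of_bounded (Lp.aestronglyMeasurable _) (theta_bound θ hθ) f).toLp _

theorem thetaMul_coe (θ : Hd) (hθ : IsInnerFn θ) (f : Ltwo) :
    (thetaMul θ hθ f : Tc → ℂ) =ᵐ[muc]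
      fun x => (((θ : Hd) : Ltwo) : Tc → ℂ) x * (f : Tc → ℂ) x :=
  MemLp.coeFn_toLp _

/-- For an inner function `θ`, one has `S*(K_θ ∩ 𝟙^⊥) = K_θ ∩ (S*θ)^⊥`. -/
theorem sstar_image_Kspace_inter_one_perp (θ : Hd) (hθ : IsInnerFn θ) :
    SstarOp '' {h : Hd | h ∈ Kspace θ ∧ ipH h oneH = 0} =
      {g : Hd | g ∈ Kspace θ ∧ ipH g (SstarOp θ) = 0} := by
  ext g
  simp only [Set.mem_image, Set.mem_setOf_eq]
  constructor
  · rintro ⟨h, ⟨⟨hH, hKperp⟩, hone⟩, rfl⟩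
    have hch0 : fourierBasis.repr ((h : Hd) : Ltwo) 0 = 0 := by rw [← ipH_oneH]; exact hone
    have hh0 : ∀ m : ℤ, m ≤ 0 → fourierBasis.repr ((h : Hd) : Ltwo) m = 0 := by
      intro m hm
      rcases eq_or_lt_of_le hm with h1 | h1
      · rw [h1]; exact hch0
      · exact mem_Hardy_repr h.2 h1
    have hSh : ∀ n : ℤ, fourierBasis.repr ((SstarOp h : Hd) : Ltwo) n =
        fourierBasis.repr ((h : Hd) : Ltwo) (n + 1) := by
      intro n
      rw [Sstar_repr]
      by_cases hn : n < 0
      · rw [if_pos hn, hh0 (n + 1) (by omega)]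
      · rw [if_neg hn]
    have hShcoe : ((SstarOp h : Hd) : Ltwo) = mulF (-1) ((h : Hd) : Ltwo) :=
      Ltwo_ext fun n => by rw [hSh n, repr_mulF, sub_neg_eq_add]
    refine ⟨⟨(SstarOp h).2, ?_⟩, ?_⟩
    · intro w hw
      obtain ⟨f, hf⟩ := hw
      have h1 : mulF 1 w ∈ thetaHardy θ := by
        refine ⟨Sop f, ?_⟩
        filter_upwards [mulF_coe 1 w, hf,
          mulF_coe 1 ((f : Hd) : Ltwo)] with x hx1 hx2 hx3
        rw [hx1, hx2, show ((Sop f : Hd) : Ltwo) = mulF 1 ((f : Hd) : Ltwo) from rfl, hx3]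
        ring
      calc ipL ((SstarOp h : Hd) : Ltwo) w = ipL (mulF (-1) ((h : Hd) : Ltwo)) w := by
            rw [hShcoe]
        _ = ipL ((h : Hd) : Ltwo) (mulF 1 w) := by
            have := ipL_mulF (-1) ((h : Hd) : Ltwo) w
            rwa [neg_neg] at this
        _ = 0 := hKperp _ h1
    · have hθKθ : ((θ : Hd) : Ltwo) ∈ thetaHardy θ := by
        refine ⟨oneH, ?_⟩
        filter_upwards [oneH_ae] with x hx
        rw [hx, mul_one]
      have hipθ : ipL ((h : Hd) : Ltwo) ((θ : Hd) : Ltwo) = 0 := hKperp _ hθKθ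
      have e1 : ipH (SstarOp h) (SstarOp θ) =
          ∑' n : ℤ, (starRingEnd ℂ) (fourierBasis.repr ((θ : Hd) : Ltwo) (n + 1)) *
            fourierBasis.repr ((h : Hd) : Ltwo) (n + 1) := by
        rw [ipH_eq, ipL_tsum]
        apply tsum_congr
        intro n
        rw [hSh n, Sstar_repr]
        by_cases hn : n < 0
        · rw [if_pos hn, map_zero, zero_mul, hh0 (n + 1) (by omega), mul_zero]
        · rw [if_neg hn]
      rw [e1, ← hipθ, ipL_tsum]
      calc ∑' n : ℤ, (starRingEnd ℂ) (fourierBasis.repr ((θ : Hd) : Ltwo) (n + 1)) *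
            fourierBasis.repr ((h : Hd) : Ltwo) (n + 1)
          = ∑' n : ℤ, (starRingEnd ℂ)
              (fourierBasis.repr ((θ : Hd) : Ltwo) ((Equiv.addRight (1 : ℤ)) n)) *
              fourierBasis.repr ((h : Hd) : Ltwo) ((Equiv.addRight (1 : ℤ)) n) :=
            tsum_congr fun n => by rw [Equiv.coe_addRight]
        _ = ∑' n : ℤ, (starRingEnd ℂ) (fourierBasis.repr ((θ : Hd) : Ltwo) n) *
              fourierBasis.repr ((h : Hd) : Ltwo) n :=
            Equiv.tsum_eq (Equiv.addRight (1 : ℤ))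
              (fun k => (starRingEnd ℂ) (fourierBasis.repr ((θ : Hd) : Ltwo) k) *
                fourierBasis.repr ((h : Hd) : Ltwo) k)
  · rintro ⟨⟨hH, hKperp⟩, hperp⟩
    have hSopg : ((Sop g : Hd) : Ltwo) = mulF 1 ((g : Hd) : Ltwo) := rfl
    refine ⟨Sop g, ⟨⟨(Sop g).2, ?_⟩, ?_⟩, ?_⟩
    · -- Sop g ⊥ θH²
      intro w hw
      obtain ⟨f, hf⟩ := hw
      set c0 := fourierBasis.repr ((f : Hd) : Ltwo) 0 with hc0
      have hfdec : ((f : Hd) : Ltwo) =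
          c0 • ((oneH : Hd) : Ltwo) + mulF 1 ((SstarOp f : Hd) : Ltwo) := by
        apply Ltwo_ext
        intro n
        rw [map_add, _root_.map_smul, lp.coeFn_add, Pi.add_apply, lp.coeFn_smul, Pi.smul_apply,
          repr_oneH, repr_mulF, Sstar_repr, smul_eq_mul, mul_ite, mul_one, mul_zero]
        by_cases h0 : n = 0
        · rw [if_pos h0, if_pos (by omega), add_zero, h0]
        · rw [if_neg h0]
          by_cases hn : n - 1 < 0
          · rw [if_pos hn, add_zero, mem_Hardy_repr f.2 (by omega)]
          · rw [if_neg hn, zero_add, sub_add_cancel]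
      have hfae : (((f : Hd) : Ltwo) : Tc → ℂ) =ᵐ[muc]
          fun x => c0 + fourier 1 x * (((SstarOp f : Hd) : Ltwo) : Tc → ℂ) x := by
        filter_upwards [Lp.coeFn_add (c0 • ((oneH : Hd) : Ltwo))
            (mulF 1 ((SstarOp f : Hd) : Ltwo)),
          Lp.coeFn_smul c0 ((oneH : Hd) : Ltwo), mulF_coe 1 ((SstarOp f : Hd) : Ltwo),
          oneH_ae] with x h1 h2 h3 h4
        rw [hfdec, h1, Pi.add_apply, h2, Pi.smul_apply, h3, h4, smul_eq_mul, mul_one]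
      have hW : mulF (-1) w =
          c0 • mulF (-1) ((θ : Hd) : Ltwo) + thetaMul θ hθ ((SstarOp f : Hd) : Ltwo) := by
        apply Ltwo_ext_ae
        filter_upwards [mulF_coe (-1) w, hf, hfae,
          Lp.coeFn_add (c0 • mulF (-1) ((θ : Hd) : Ltwo))
            (thetaMul θ hθ ((SstarOp f : Hd) : Ltwo)),
          Lp.coeFn_smul c0 (mulF (-1) ((θ : Hd) : Ltwo)),
          mulF_coe (-1) ((θ : Hd) : Ltwo),
          thetaMul_coe θ hθ ((SstarOp f : Hd) : Ltwo)] with x h1 h2 h3 h4 h5 h6 h7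
        rw [h1, h2, h3, h4, Pi.add_apply, h5, Pi.smul_apply, h6, h7, smul_eq_mul]
        have hfx : fourier (-1) x * fourier 1 x = 1 := by
          rw [← fourier_add]
          norm_num [fourier_zero]
        linear_combination ((((θ : Hd) : Ltwo) : Tc → ℂ) x *
          (((SstarOp f : Hd) : Ltwo) : Tc → ℂ) x) * hfx
      have hstep : ipL ((Sop g : Hd) : Ltwo) w = ipL ((g : Hd) : Ltwo) (mulF (-1) w) := by
        rw [hSopg]
        exact ipL_mulF 1 ((g : Hd) : Ltwo) w
      have hB : ipL ((g : Hd) : Ltwo) (thetaMul θ hθ ((SstarOp f : Hd) : Ltwo)) = 0 :=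
        hKperp _ ⟨SstarOp f, thetaMul_coe θ hθ _⟩
      have hA : ipL ((g : Hd) : Ltwo) (mulF (-1) ((θ : Hd) : Ltwo)) = 0 := by
        have e2 : ipL ((g : Hd) : Ltwo) (mulF (-1) ((θ : Hd) : Ltwo)) =
            ipL ((g : Hd) : Ltwo) ((SstarOp θ : Hd) : Ltwo) := by
          rw [ipL_tsum, ipL_tsum]
          apply tsum_congr
          intro n
          rw [repr_mulF, sub_neg_eq_add, Sstar_repr]
          by_cases hn : n < 0
          · rw [mem_Hardy_repr g.2 hn, mul_zero, mul_zero]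
          · rw [if_neg hn]
        rw [e2]
        exact hperp
      rw [hstep, hW, ipL_add_right, ipL_smul_right, hA, hB, mul_zero, add_zero]
    · rw [ipH_oneH, hSopg, repr_mulF]
      exact mem_Hardy_repr g.2 (by norm_num)
    · apply Subtype.ext
      apply Ltwo_ext
      intro n
      rw [Sstar_repr, hSopg, repr_mulF, add_sub_cancel_right]
      by_cases hn : n < 0
      · rw [if_pos hn, mem_Hardy_repr g.2 hn]
      · rw [if_neg hn]


end HankelSchmidt
end
end

section
/- Let H be a bounded Hankel operator on H² and u = H𝟙. Then for every f ∈ H², S*(H(Hf)) − H(H(S*f)) = ⟨f, 𝟙⟩·S*(Hu) − ⟨f, Su⟩·u. -/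
open MeasureTheory Complex Filter

noncomputable section

namespace HankelSchmidt

/-! ### Auxiliary lemmas -/

theorem mulF_add (n : ℤ) (f g : Ltwo) : mulF n (f + g) = mulF n f + mulF n g := by
  apply Lp.ext
  filter_upwards [mulF_coe n (f + g), mulF_coe n f, mulF_coe n g, Lp.coeFn_add f g,
    Lp.coeFn_add (mulF n f) (mulF n g)] with x h1 h2 h3 h4 h5
  rw [h5, Pi.add_apply, h1, h2, h3, h4, Pi.add_apply, mul_add]

theorem mulF_smul (n : ℤ) (c : ℂ) (f : Ltwo) : mulF n (c • f) = c • mulF n f := by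
  apply Lp.ext
  filter_upwards [mulF_coe n (c • f), mulF_coe n f, Lp.coeFn_smul c f,
    Lp.coeFn_smul c (mulF n f)] with x h1 h2 h3 h4
  rw [h4, Pi.smul_apply, h1, h2, h3, Pi.smul_apply, smul_eq_mul, smul_eq_mul]
  ring

theorem mulF_sub_s7 (n : ℤ) (f g : Ltwo) : mulF n (f - g) = mulF n f - mulF n g := by
  apply Lp.ext
  filter_upwards [mulF_coe n (f - g), mulF_coe n f, mulF_coe n g, Lp.coeFn_sub f g,
    Lp.coeFn_sub (mulF n f) (mulF n g)] with x h1 h2 h3 h4 h5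
  rw [h5, Pi.sub_apply, h1, h2, h3, h4, Pi.sub_apply, mul_sub]

theorem mulF_mulF (m n : ℤ) (f : Ltwo) : mulF m (mulF n f) = mulF (m + n) f := by
  apply Lp.ext
  filter_upwards [mulF_coe m (mulF n f), mulF_coe n f, mulF_coe (m + n) f] with x h1 h2 h3
  rw [h1, h2, h3, fourier_add, mul_assoc]

theorem mulF_zero' (f : Ltwo) : mulF 0 f = f := by
  apply Lp.ext
  filter_upwards [mulF_coe 0 f] with x h1
  rw [h1, fourier_zero, one_mul]

theorem mulF_fourierLp (m n : ℤ) : mulF m (fourierLp 2 n) = fourierLp 2 (m + n) := by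
  apply Lp.ext
  filter_upwards [mulF_coe m (fourierLp 2 n), coeFn_fourierLp 2 n,
    coeFn_fourierLp 2 (m + n)] with x h1 h2 h3
  rw [h1, h2, h3, fourier_add]

theorem inner_mulF (n : ℤ) (f g : Ltwo) :
    @inner ℂ Ltwo _ (mulF n f) g = @inner ℂ Ltwo _ f (mulF (-n) g) := by
  rw [L2.inner_def, L2.inner_def]
  refine integral_congr_ae ?_
  filter_upwards [mulF_coe n f, mulF_coe (-n) g] with x h1 h2
  rw [h1, h2, RCLike.inner_apply, RCLike.inner_apply, map_mul, ← fourier_neg]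
  ring

theorem repr_fourierLp (m n : ℤ) :
    fourierBasis.repr (fourierLp (T := 2 * Real.pi) 2 m) n = if n = m then 1 else 0 := by
  have h1 : (fourierLp (T := 2 * Real.pi) 2 m) = fourierBasis m := by rw [coe_fourierBasis]
  rw [h1, HilbertBasis.repr_self]
  rcases eq_or_ne n m with h | h
  · subst h; rw [lp.single_apply_self, if_pos rfl]
  · rw [lp.single_apply_ne _ _ _ h, if_neg h]

theorem fourierLp_mem_Hardy {m : ℤ} (hm : 0 ≤ m) :
    (fourierLp (T := 2 * Real.pi) 2 m : Ltwo) ∈ Hardy := by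
  intro n hn
  rw [repr_fourierLp, if_neg (by omega)]

/-- The basis vectors `z^k`, `k ∈ ℕ`, of the Hardy space. -/
def epsH (k : ℕ) : Hd := ⟨fourierLp 2 (k : ℤ), fourierLp_mem_Hardy (Int.ofNat_nonneg k)⟩

theorem oneH_eq : oneH = epsH 0 := by
  apply Subtype.ext
  show (fourierLp 2 0 : Ltwo) = fourierLp 2 ((0 : ℕ) : ℤ)
  norm_num

theorem Sop_coe (f : Hd) : ((Sop f : Hd) : Ltwo) = mulF 1 (f : Ltwo) := rfl

theorem SstarOp_coe (f : Hd) :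
    ((SstarOp f : Hd) : Ltwo) = ((P2 (mulF (-1) (f : Ltwo)) : Hd) : Ltwo) := rfl

theorem Sop_epsH (k : ℕ) : Sop (epsH k) = epsH (k + 1) := by
  apply Subtype.ext
  rw [Sop_coe]
  show mulF 1 (fourierLp 2 (k : ℤ)) = (fourierLp 2 ((k + 1 : ℕ) : ℤ) : Ltwo)
  rw [mulF_fourierLp]
  congr 1
  push_cast
  ring

theorem Sop_sub (f g : Hd) : Sop (f - g) = Sop f - Sop g := by
  apply Subtype.ext
  rw [Sop_coe, Submodule.coe_sub, Submodule.coe_sub, Sop_coe, Sop_coe, mulF_sub_s7]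

theorem Sop_smul (c : ℂ) (f : Hd) : Sop (c • f) = c • Sop f := by
  apply Subtype.ext
  rw [Sop_coe, Submodule.coe_smul, Submodule.coe_smul, Sop_coe, mulF_smul]

theorem inner_P2 (a : Hd) (x : Ltwo) :
    @inner ℂ Ltwo _ (a : Ltwo) ((P2 x : Hd) : Ltwo) = @inner ℂ Ltwo _ (a : Ltwo) x := by
  have h := Submodule.sub_starProjection_mem_orthogonal (K := Hardy) x
  have h2 := (Submodule.mem_orthogonal Hardy _).1 h (a : Ltwo) a.2
  rw [inner_sub_right, sub_eq_zero] at h2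
  exact h2.symm

theorem adjoint_S (a b : Hd) : @inner ℂ Hd _ (Sop a) b = @inner ℂ Hd _ a (SstarOp b) := by
  rw [Submodule.coe_inner, Submodule.coe_inner, Sop_coe, SstarOp_coe, inner_mulF]
  exact (inner_P2 a (mulF (-(1 : ℤ)) (b : Ltwo))).symm

theorem SstarOp_Sop (g : Hd) : SstarOp (Sop g) = g := by
  have h : mulF (-1) ((Sop g : Hd) : Ltwo) = (g : Ltwo) := by
    rw [Sop_coe, mulF_mulF]
    norm_num [mulF_zero']
  show P2 (mulF (-1) ((Sop g : Hd) : Ltwo)) = g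
  rw [h]
  exact Submodule.orthogonalProjectionOnto_mem_subspace_eq_self g

theorem SstarOp_sub (f g : Hd) : SstarOp (f - g) = SstarOp f - SstarOp g := by
  show P2 (mulF (-1) ((f - g : Hd) : Ltwo)) = _
  rw [Submodule.coe_sub, mulF_sub_s7]
  exact map_sub (Hardy.orthogonalProjectionOnto) _ _

theorem inner_oneH (g : Hd) :
    @inner ℂ Hd _ oneH g = fourierBasis.repr (g : Ltwo) 0 := by
  rw [Submodule.coe_inner]
  show @inner ℂ Ltwo _ (fourierLp 2 0) (g : Ltwo) = _
  rw [← coe_fourierBasis, ← HilbertBasis.repr_apply_apply]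

theorem eNegOne_mem_orthogonal :
    (fourierLp (T := 2 * Real.pi) 2 (-1) : Ltwo) ∈ Hardyᗮ := by
  rw [Submodule.mem_orthogonal']
  intro u hu
  have h : @inner ℂ Ltwo _ u (fourierLp (T := 2 * Real.pi) 2 (-1) : Ltwo) = 0 := by
    have h2 : @inner ℂ Ltwo _ (fourierLp (T := 2 * Real.pi) 2 (-1) : Ltwo) u = 0 := by
      rw [← coe_fourierBasis, ← HilbertBasis.repr_apply_apply]
      exact hu (-1) (by norm_num)
    rw [← inner_conj_symm, h2, map_zero]
  rw [← inner_conj_symm, h, map_zero]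

theorem Sop_SstarOp (g : Hd) :
    Sop (SstarOp g) = g - (@inner ℂ Hd _ oneH g) • oneH := by
  set c : ℂ := fourierBasis.repr (g : Ltwo) 0 with hc
  have hmem : mulF (-1) (g : Ltwo) - c • (fourierLp 2 (-1) : Ltwo) ∈ Hardy := by
    intro n hn
    have hr1 : fourierBasis.repr (mulF (-1) (g : Ltwo)) n
        = fourierBasis.repr (g : Ltwo) (n + 1) := by
      rw [fourierBasis_repr, fourierBasis_repr,
        fourierCoeff_congr_ae (mulF_coe (-1) (g : Ltwo)) n, fourierCoeff_fourier_mul]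
      norm_num
    rw [map_sub, lp.coeFn_sub, Pi.sub_apply, _root_.map_smul, lp.coeFn_smul, Pi.smul_apply,
      hr1, repr_fourierLp, smul_eq_mul]
    rcases eq_or_ne n (-1) with h | h
    · subst h
      have h0 : (-1 : ℤ) + 1 = 0 := by norm_num
      rw [h0, if_pos rfl, mul_one, ← hc, sub_self]
    · rw [if_neg h, mul_zero, sub_zero]
      exact g.2 (n + 1) (by omega)
  have hP : ((P2 (mulF (-1) (g : Ltwo)) : Hd) : Ltwo)
      = mulF (-1) (g : Ltwo) - c • (fourierLp 2 (-1) : Ltwo) := by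
    apply Submodule.eq_starProjection_of_mem_orthogonal hmem
    rw [sub_sub_cancel]
    exact Submodule.smul_mem _ _ eNegOne_mem_orthogonal
  apply Subtype.ext
  rw [Sop_coe, SstarOp_coe, hP, mulF_sub_s7, mulF_mulF, mulF_smul, mulF_fourierLp]
  rw [Submodule.coe_sub, Submodule.coe_smul, inner_oneH, ← hc]
  norm_num [mulF_zero']
  rfl

theorem sym_shift (H : Hd →L⋆[ℂ] Hd) (hH : IsHankelOp H) (m k : ℕ) :
    @inner ℂ Hd _ (epsH m) (H (epsH (k + 1))) = @inner ℂ Hd _ (epsH (m + 1)) (H (epsH k)) := by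
  rw [← Sop_epsH k, ← hH (epsH k), ← adjoint_S, Sop_epsH]

theorem sym_base (H : Hd →L⋆[ℂ] Hd) (hH : IsHankelOp H) (k : ℕ) :
    ∀ m : ℕ, @inner ℂ Hd _ (epsH m) (H (epsH k)) = @inner ℂ Hd _ (epsH (m + k)) (H (epsH 0)) := by
  induction k with
  | zero => intro m; rfl
  | succ n ih =>
      intro m
      rw [sym_shift H hH m n, ih (m + 1)]
      congr 2
      omega

theorem dense_epsH (f : Hd) :
    f ∈ closure ((Submodule.span ℂ (Set.range epsH) : Submodule ℂ Hd) : Set Hd) := by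
  set c : ℤ → ℂ := fun i => fourierBasis.repr (f : Ltwo) i with hc
  set F : ℤ → Hd := fun i => if h : 0 ≤ i then c i • epsH i.toNat else 0 with hF
  have hcoe : ∀ i : ℤ, ((F i : Hd) : Ltwo) = c i • fourierBasis i := by
    intro i
    by_cases h : 0 ≤ i
    · rw [hF]
      simp only [dif_pos h]
      rw [Submodule.coe_smul]
      congr 1
      show (fourierLp 2 ((i.toNat : ℕ) : ℤ) : Ltwo) = fourierBasis i
      rw [← coe_fourierBasis]
      congr 1
      omega
    · have hz : c i = 0 := f.2 i (by omega)
      rw [hF]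
      simp only [dif_neg h, hz, zero_smul, Submodule.coe_zero]
  have hsum : HasSum (fun i : ℤ => c i • fourierBasis i) (f : Ltwo) :=
    fourierBasis.hasSum_repr (f : Ltwo)
  have ht : Tendsto (fun s : Finset ℤ => ∑ i ∈ s, F i) atTop (nhds f) := by
    rw [Topology.IsInducing.subtypeVal.tendsto_nhds_iff]
    have heq : (fun s : Finset ℤ => ((∑ i ∈ s, F i : Hd) : Ltwo))
        = fun s : Finset ℤ => ∑ i ∈ s, c i • fourierBasis i := by
      funext s
      rw [Submodule.coe_sum]
      exact Finset.sum_congr rfl fun i _ => hcoe i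
    show Tendsto (fun s : Finset ℤ => ((∑ i ∈ s, F i : Hd) : Ltwo)) atTop _
    rw [heq]
    exact hsum
  refine mem_closure_of_tendsto ht (Eventually.of_forall fun s => ?_)
  refine Submodule.sum_mem _ fun i _ => ?_
  rw [hF]
  by_cases h : 0 ≤ i
  · simp only [dif_pos h]
    exact Submodule.smul_mem _ _ (Submodule.subset_span ⟨_, rfl⟩)
  · simp only [dif_neg h]
    exact Submodule.zero_mem _

theorem sym (H : Hd →L⋆[ℂ] Hd) (hH : IsHankelOp H) (g : Hd) :
    @inner ℂ Hd _ oneH (H g) = @inner ℂ Hd _ g (H oneH) := by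
  set Z : Set Hd := {x : Hd | @inner ℂ Hd _ oneH (H x) = @inner ℂ Hd _ x (H oneH)} with hZ
  have hZc : IsClosed Z := by
    apply isClosed_eq
    · exact Continuous.inner continuous_const (H.continuous)
    · exact Continuous.inner (continuous_id : Continuous fun x : Hd => x) continuous_const
  have hspan : ((Submodule.span ℂ (Set.range epsH) : Submodule ℂ Hd) : Set Hd) ⊆ Z := by
    intro x hx
    induction hx using Submodule.span_induction with
    | mem y hy =>
        obtain ⟨k, rfl⟩ := hy
        show @inner ℂ Hd _ oneH (H (epsH k)) = @inner ℂ Hd _ (epsH k) (H oneH)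
        rw [oneH_eq]
        rw [sym_base H hH k 0]
        congr 2
        omega
    | zero => show @inner ℂ Hd _ oneH (H 0) = @inner ℂ Hd _ (0 : Hd) (H oneH); simp
    | add a b _ _ ha hb =>
        show @inner ℂ Hd _ oneH (H (a + b)) = @inner ℂ Hd _ (a + b) (H oneH)
        rw [map_add, inner_add_right, inner_add_left, ha, hb]
    | smul a x _ hx =>
        show @inner ℂ Hd _ oneH (H (a • x)) = @inner ℂ Hd _ (a • x) (H oneH)
        rw [map_smulₛₗ, inner_smul_right, hx]
        exact (inner_smul_left (𝕜 := ℂ) (x : Hd) (H oneH) a).symm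
  exact hZc.closure_subset (closure_mono hspan (dense_epsH g))

/-- The commutator identity `S*H² − H²S* = (·,𝟙)S*Hu − (·,Su)u`, where `u = H𝟙`. -/
theorem sstar_Hsq_commutator (H : Hd →L⋆[ℂ] Hd) (hH : IsHankelOp H) (f : Hd) :
    SstarOp (H (H f)) - H (H (SstarOp f)) =
      ipH f oneH • SstarOp (H (H oneH)) - ipH f (Sop (H oneH)) • H oneH := by
  set u : Hd := H oneH with hu
  -- the key rearranged identity
  have key : Sop (H f) - H (SstarOp f)
      = (starRingEnd ℂ) (@inner ℂ Hd _ oneH f) • Sop u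
        - (@inner ℂ Hd _ oneH (H (SstarOp f))) • oneH := by
    have h1 : Sop (H (Sop (SstarOp f)))
        = H (SstarOp f) - (@inner ℂ Hd _ oneH (H (SstarOp f))) • oneH := by
      have h := Sop_SstarOp (H (SstarOp f))
      rwa [hH (SstarOp f)] at h
    have h2 : H (Sop (SstarOp f))
        = H f - (starRingEnd ℂ) (@inner ℂ Hd _ oneH f) • u := by
      rw [Sop_SstarOp f, map_sub, map_smulₛₗ, hu]
    rw [h2, Sop_sub, Sop_smul] at h1
    rw [sub_eq_sub_iff_sub_eq_sub]
    exact h1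
  have hL : SstarOp (H (H f)) - H (H (SstarOp f))
      = H (Sop (H f) - H (SstarOp f)) := by
    rw [map_sub, hH (H f)]
  rw [hL, key, map_sub, map_smulₛₗ, map_smulₛₗ, starRingEnd_self_apply]
  have e1 : H (Sop u) = SstarOp (H (H oneH)) := by rw [← hH u, hu]
  have e2 : ipH f oneH = @inner ℂ Hd _ oneH f := by
    simp only [ipH, Submodule.coe_inner]
  have e3 : (starRingEnd ℂ) (@inner ℂ Hd _ oneH (H (SstarOp f))) = ipH f (Sop u) := by
    rw [sym H hH (SstarOp f), ← hu, show (starRingEnd ℂ) (@inner ℂ Hd _ (SstarOp f) u)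
      = @inner ℂ Hd _ u (SstarOp f) from inner_conj_symm (𝕜 := ℂ) (u : Hd) (SstarOp f), ← adjoint_S u f]
    simp only [ipH, Submodule.coe_inner]
  rw [e1, e2, e3, hu]

end HankelSchmidt
end
end
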